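/- arXiv:0810.0091 — 2 statements merged into one kernel-verified Lean document; each statement's English description precedes it below -/
import Mathlib

section
/- Let A be a commutative ring and let C• be a bounded cochain complex of A-modules in which every term C^i is a flat A-module and every cohomology module H^i(C•) is a flat A-module. Then for every A-module M and every integer i, there is an isomorphism of A-modules H^i(C• ⊗_A M) ≅ H^i(C•) ⊗_A M, where C• ⊗_A M denotes the complex obtained by tensoring each term with M. -/
/-!
STATEMENT 2: if `C•` is a bounded cochain complex of `A`-modules with flat
terms and flat cohomology modules, then for every `A`-module `M` and every `i`
one has `H^i(C• ⊗_A M) ≅ H^i(C•) ⊗_A M`.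
-/

open CategoryTheory CategoryTheory.Limits MonoidalCategory TensorProduct

universe u

open Function LinearMap

section Aux

variable {R : Type u} [CommRing R]

/-- transpose of a map into a character module -/
@[simps] def charFlip {B M : Type*} [AddCommGroup B] [AddCommGroup M] [Module R B] [Module R M]
    (φ : B →ₗ[R] CharacterModule M) : M →ₗ[R] CharacterModule B where
  toFun m :=
    { toFun := fun b => φ b m
      map_zero' := by show φ 0 m = 0; rw [map_zero φ]; rfl
      map_add' := fun b b' => by show φ (b + b') m = φ b m + φ b' m; rw [map_add φ b b']; rfl }
  map_add' m m' := by ext b; exact map_add (φ b) m m'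
  map_smul' r m := by
    ext b
    show φ b (r • m) = φ (r • b) m
    rw [map_smul φ r b]
    rfl

theorem rTensor_injective_of_flat_quotient
    {B C Q : Type u} [AddCommGroup B] [AddCommGroup C] [AddCommGroup Q]
    [Module R B] [Module R C] [Module R Q]
    (ι : B →ₗ[R] C) (π : C →ₗ[R] Q) (hι : Function.Injective ι)
    (hπ : Function.Surjective π) (hexact : Function.Exact ι π) [Module.Flat R Q]
    (M : Type u) [AddCommGroup M] [Module R M] :
    Function.Injective (ι.rTensor M) := by
  rw [← LinearMap.ker_eq_bot, eq_bot_iff]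
  intro t ht
  rw [LinearMap.mem_ker] at ht
  rw [Submodule.mem_bot]
  refine CharacterModule.eq_zero_of_character_apply (fun g => ?_)
  -- dual maps
  set ιd : CharacterModule C →ₗ[R] CharacterModule B := CharacterModule.dual ι
  set πd : CharacterModule Q →ₗ[R] CharacterModule C := CharacterModule.dual π
  have hπd_inj : Function.Injective πd := by
    intro L L' h
    ext q
    obtain ⟨c, rfl⟩ := hπ q
    exact DFunLike.congr_fun h c
  -- retraction of πd via Baer criterion for flat Q
  obtain ⟨r, hr⟩ := (Module.Flat.iff_characterModule_baer.mp ‹Module.Flat R Q›).extension_property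
    πd hπd_inj LinearMap.id
  -- exactness of dual: ker ιd ≤ range πd
  have hdual_exact : ∀ L : CharacterModule C, ιd L = 0 → ∃ K : CharacterModule Q, πd K = L := by
    intro L hL
    have hker : ∀ c, c ∈ LinearMap.ker π → L c = 0 := by
      intro c hc
      rw [LinearMap.mem_ker] at hc
      obtain ⟨b, rfl⟩ := (hexact c).mp hc
      exact DFunLike.congr_fun hL b
    let e : (C ⧸ AddMonoidHom.ker π.toAddMonoidHom) ≃+ Q :=
      QuotientAddGroup.quotientKerEquivOfSurjective π.toAddMonoidHom hπ
    have hsub : π.toAddMonoidHom.ker ≤ AddMonoidHom.ker (L : C →+ AddCircle (1 : ℚ)) := by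
      intro c hc
      exact hker c hc
    refine ⟨(QuotientAddGroup.lift _ (L : C →+ AddCircle (1 : ℚ)) hsub).comp
      e.symm.toAddMonoidHom, ?_⟩
    ext c
    have hc : e.symm (π c) = QuotientAddGroup.mk c := by
      apply e.injective
      rw [AddEquiv.apply_symm_apply]
      rfl
    show (QuotientAddGroup.lift _ (L : C →+ AddCircle (1 : ℚ)) hsub) (e.symm (π c)) = L c
    rw [hc]
    rfl
  -- the section s of ιd
  have hιπd : ∀ K : CharacterModule Q, ιd (πd K) = 0 := by
    intro K; ext b
    show K (π (ι b)) = 0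
    rw [hexact.apply_apply_eq_zero b, map_zero]
  -- now build g' on C ⊗ M
  set φ : B →ₗ[R] CharacterModule M := CharacterModule.homEquiv.symm g
  set φt : M →ₗ[R] CharacterModule B := charFlip φ
  -- lift φt through ιd pointwise-linearly: use e := id - πd ∘ r to split
  set eC : CharacterModule C →ₗ[R] CharacterModule C := LinearMap.id - πd ∘ₗ r
  have heC : ∀ x, x ∈ LinearMap.ker ιd → eC x = 0 := by
    intro x hx
    rw [LinearMap.mem_ker] at hx
    obtain ⟨K, rfl⟩ := hdual_exact x hx
    have : r (πd K) = K := DFunLike.congr_fun hr K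
    simp [eC, this]
  have hιd_surj : Function.Surjective ιd := CharacterModule.dual_surjective_of_injective ι hι
  -- s : B^∨ → C^∨ with ιd ∘ s = id
  obtain ⟨s, hs⟩ : ∃ s : CharacterModule B →ₗ[R] CharacterModule C, ∀ ψ, ιd (s ψ) = ψ := by
    let sbar : (CharacterModule C ⧸ LinearMap.ker ιd) →ₗ[R] CharacterModule C :=
      Submodule.liftQ _ eC (fun x hx => heC x hx)
    let q : (CharacterModule C ⧸ LinearMap.ker ιd) ≃ₗ[R] CharacterModule B :=
      ιd.quotKerEquivOfSurjective hιd_surj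
    refine ⟨sbar ∘ₗ q.symm.toLinearMap, fun ψ => ?_⟩
    obtain ⟨x, rfl⟩ := hιd_surj ψ
    have hq : q.symm (ιd x) = Submodule.Quotient.mk x := by
      apply q.injective
      simp only [LinearEquiv.apply_symm_apply]
      rfl
    simp only [LinearMap.coe_comp, Function.comp_apply, LinearEquiv.coe_coe, hq]
    show ιd (eC x) = ιd x
    simp only [eC, LinearMap.sub_apply, LinearMap.id_apply, map_sub, LinearMap.coe_comp,
      Function.comp_apply, hιπd]
    simp
  -- ψ : C →ₗ M^∨ extending φ
  set ψ : C →ₗ[R] CharacterModule M := charFlip (s ∘ₗ φt)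
  have hψ : ψ ∘ₗ ι = φ := by
    ext b m
    show (ιd (s (φt m))) b = φ b m
    rw [hs]
    rfl
  -- conclude
  have key : CharacterModule.dual (ι.rTensor M) (CharacterModule.homEquiv ψ) = g := by
    have h1 := congr($(CharacterModule.dual_rTensor_conj_homEquiv (A := B) (B := M) (A' := C) ι) ψ)
    simp only [LinearMap.coe_comp, Function.comp_apply, LinearMap.lcomp_apply',
      LinearEquiv.coe_coe] at h1
    rw [hψ] at h1
    rw [LinearEquiv.symm_apply_eq] at h1
    rw [h1]
    show CharacterModule.homEquiv (CharacterModule.homEquiv.symm g) = g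
    exact CharacterModule.homEquiv.apply_symm_apply g
  rw [← key]
  show (CharacterModule.homEquiv ψ) ((ι.rTensor M) t) = 0
  rw [ht, map_zero]

/-- In a SES `0 → K → X → B → 0` with `X` and `B` flat, the kernel `K` is flat. -/
theorem flat_ker_of_flat_of_flat
    {K X B : Type u} [AddCommGroup K] [AddCommGroup X] [AddCommGroup B]
    [Module R K] [Module R X] [Module R B]
    (ι : K →ₗ[R] X) (π : X →ₗ[R] B) (hι : Function.Injective ι)
    (hπ : Function.Surjective π) (hexact : Function.Exact ι π)
    [Module.Flat R X] [Module.Flat R B] : Module.Flat R K := by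
  rw [Module.Flat.iff_lTensor_preserves_injective_linearMap]
  intro N N' _ _ _ _ f hf
  rw [← LinearMap.ker_eq_bot, eq_bot_iff]
  intro t ht
  rw [LinearMap.mem_ker] at ht
  rw [Submodule.mem_bot]
  have h1 : (f.lTensor X) ((ι.rTensor N) t) = 0 := by
    have : (f.lTensor X) ∘ₗ (ι.rTensor N) = (ι.rTensor N') ∘ₗ (f.lTensor K) := by
      rw [LinearMap.lTensor_comp_rTensor, LinearMap.rTensor_comp_lTensor]
    have h2 := congr($(this) t)
    simp only [LinearMap.coe_comp, Function.comp_apply] at h2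
    rw [h2, ht, map_zero]
  have h3 : (ι.rTensor N) t = 0 :=
    Module.Flat.lTensor_preserves_injective_linearMap f hf h1
  exact rTensor_injective_of_flat_quotient ι π hι hπ hexact N h3

/-- Flat modules are closed under extensions. -/
theorem flat_of_flat_of_flat
    {K X B : Type u} [AddCommGroup K] [AddCommGroup X] [AddCommGroup B]
    [Module R K] [Module R X] [Module R B]
    (ι : K →ₗ[R] X) (π : X →ₗ[R] B) (hι : Function.Injective ι)
    (hπ : Function.Surjective π) (hexact : Function.Exact ι π)
    [Module.Flat R K] [Module.Flat R B] : Module.Flat R X := by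
  rw [Module.Flat.iff_lTensor_preserves_injective_linearMap]
  intro N N' _ _ _ _ f hf
  rw [← LinearMap.ker_eq_bot, eq_bot_iff]
  intro t ht
  rw [LinearMap.mem_ker] at ht
  rw [Submodule.mem_bot]
  have comm1 : (f.lTensor B) ∘ₗ (π.rTensor N) = (π.rTensor N') ∘ₗ (f.lTensor X) := by
    rw [LinearMap.lTensor_comp_rTensor, LinearMap.rTensor_comp_lTensor]
  have h1 : (f.lTensor B) ((π.rTensor N) t) = 0 := by
    have h2 := congr($(comm1) t)
    simp only [LinearMap.coe_comp, Function.comp_apply] at h2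
    rw [h2, ht, map_zero]
  have h3 : (π.rTensor N) t = 0 :=
    Module.Flat.lTensor_preserves_injective_linearMap f hf h1
  obtain ⟨k, hk⟩ := (rTensor_exact N hexact hπ _).mp h3
  have comm2 : (f.lTensor X) ∘ₗ (ι.rTensor N) = (ι.rTensor N') ∘ₗ (f.lTensor K) := by
    rw [LinearMap.lTensor_comp_rTensor, LinearMap.rTensor_comp_lTensor]
  have h4 : (ι.rTensor N') ((f.lTensor K) k) = 0 := by
    have h5 := congr($(comm2) k)
    simp only [LinearMap.coe_comp, Function.comp_apply] at h5
    rw [← h5, hk, ht]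
  have h6 : (f.lTensor K) k = 0 :=
    rTensor_injective_of_flat_quotient ι π hι hπ hexact N' h4
  have h7 : k = 0 := Module.Flat.lTensor_preserves_injective_linearMap f hf h6
  rw [← hk, h7, map_zero]

open Submodule in
theorem key_equiv
    {X₁ X₂ X₃ : Type u} [AddCommGroup X₁] [AddCommGroup X₂] [AddCommGroup X₃]
    [Module R X₁] [Module R X₂] [Module R X₃]
    (f : X₁ →ₗ[R] X₂) (g : X₂ →ₗ[R] X₃) (hfg : g ∘ₗ f = 0)
    [Module.Flat R (LinearMap.range g)] [Module.Flat R (X₃ ⧸ LinearMap.range g)]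
    (M : Type u) [AddCommGroup M] [Module R M] :
    Nonempty ((↥(LinearMap.ker (g.rTensor M)) ⧸
        (LinearMap.range (f.rTensor M)).comap (LinearMap.ker (g.rTensor M)).subtype)
      ≃ₗ[R] ((↥(LinearMap.ker g) ⧸ (LinearMap.range f).comap (LinearMap.ker g).subtype)
          ⊗[R] M)) := by
  set Z := LinearMap.ker g
  set g₁ := g.rangeRestrict
  have hg₁_surj : Function.Surjective g₁ := LinearMap.surjective_rangeRestrict g
  have hZg₁ : Function.Exact Z.subtype g₁ := by
    rw [LinearMap.exact_iff, LinearMap.ker_rangeRestrict, Submodule.range_subtype]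
  -- α : Z ⊗ M → X₂ ⊗ M is injective
  set α := (Z.subtype).rTensor M
  have hα : Function.Injective α :=
    rTensor_injective_of_flat_quotient Z.subtype g₁ (Submodule.injective_subtype Z)
      hg₁_surj hZg₁ M
  -- β : range g ⊗ M → X₃ ⊗ M is injective
  have hβ : Function.Injective (((LinearMap.range g).subtype).rTensor M) := by
    refine rTensor_injective_of_flat_quotient (LinearMap.range g).subtype
      (LinearMap.range g).mkQ (Submodule.injective_subtype _) (Submodule.mkQ_surjective _) ?_ M
    rw [LinearMap.exact_iff, Submodule.ker_mkQ, Submodule.range_subtype]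
  -- ker (g ⊗ M) = range α
  have hker : LinearMap.ker (g.rTensor M) = LinearMap.range α := by
    have hg : g = (LinearMap.range g).subtype ∘ₗ g₁ := by ext x; rfl
    have : LinearMap.ker (g.rTensor M) = LinearMap.ker (g₁.rTensor M) := by
      conv_lhs => rw [hg]
      rw [LinearMap.rTensor_comp, LinearMap.ker_comp,
        LinearMap.ker_eq_bot.mpr hβ, Submodule.comap_bot]
    rw [this, LinearMap.exact_iff.mp (rTensor_exact M hZg₁ hg₁_surj)]
  -- the equivalence e : Z ⊗ M ≃ ker (g ⊗ M)
  set e : (Z ⊗[R] M) ≃ₗ[R] LinearMap.ker (g.rTensor M) :=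
    (LinearEquiv.ofInjective α hα).trans (LinearEquiv.ofEq _ _ hker.symm)
  have he : ∀ z : Z ⊗[R] M, (e z : X₂ ⊗[R] M) = α z := fun z => rfl
  -- f' : X₁ → Z
  have hfZ : ∀ x, f x ∈ Z := fun x => by
    rw [LinearMap.mem_ker]
    exact congr($(hfg) x)
  set f' : X₁ →ₗ[R] Z := f.codRestrict Z hfZ
  have hαf' : α ∘ₗ (f'.rTensor M) = f.rTensor M := by
    rw [← LinearMap.rTensor_comp]
    congr 1
  -- submodule correspondence
  have hmap : (LinearMap.range (f'.rTensor M)).map e.toLinearMap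
      = (LinearMap.range (f.rTensor M)).comap (LinearMap.ker (g.rTensor M)).subtype := by
    ext t
    simp only [Submodule.mem_map, LinearMap.mem_range, Submodule.mem_comap]
    constructor
    · rintro ⟨w, ⟨v, rfl⟩, rfl⟩
      refine ⟨v, ?_⟩
      show (f.rTensor M) v = (e ((f'.rTensor M) v) : X₂ ⊗[R] M)
      rw [he, ← hαf']
      rfl
    · rintro ⟨v, hv⟩
      refine ⟨(f'.rTensor M) v, ⟨v, rfl⟩, Subtype.ext ?_⟩
      show (e ((f'.rTensor M) v) : X₂ ⊗[R] M) = (t : X₂ ⊗[R] M)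
      rw [he]
      have hc : α ((f'.rTensor M) v) = (f.rTensor M) v := congr($(hαf') v)
      rw [hc, hv]
      rfl
  have equiv1 := (Submodule.Quotient.equiv (LinearMap.range (f'.rTensor M))
    ((LinearMap.range (f.rTensor M)).comap (LinearMap.ker (g.rTensor M)).subtype) e hmap).symm
  have hB : LinearMap.range f' = (LinearMap.range f).comap Z.subtype := by
    ext z
    simp only [LinearMap.mem_range, Submodule.mem_comap]
    constructor
    · rintro ⟨x, rfl⟩; exact ⟨x, rfl⟩
    · rintro ⟨x, hx⟩
      exact ⟨x, Subtype.ext hx⟩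
  set B' := (LinearMap.range f).comap Z.subtype with hB'
  have hexact2 : Function.Exact f' B'.mkQ := by
    rw [LinearMap.exact_iff, Submodule.ker_mkQ, hB]
  have hsurj2 : Function.Surjective (B'.mkQ.rTensor M) :=
    LinearMap.rTensor_surjective M (Submodule.mkQ_surjective B')
  have hker2 : LinearMap.ker (B'.mkQ.rTensor M) = LinearMap.range (f'.rTensor M) :=
    LinearMap.exact_iff.mp (rTensor_exact M hexact2 (Submodule.mkQ_surjective B'))
  have equiv2 : ((↥Z ⊗[R] M) ⧸ LinearMap.range (f'.rTensor M)) ≃ₗ[R]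
      ((↥Z ⧸ B') ⊗[R] M) :=
    (Submodule.quotEquivOfEq _ _ hker2.symm).trans
      (LinearMap.quotKerEquivOfSurjective _ hsurj2)
  exact ⟨equiv1.trans equiv2⟩

open CategoryTheory in
noncomputable def cochainHomologyEquiv {A : Type u} [CommRing A]
    (K : CochainComplex (ModuleCat.{u} A) ℤ) (p i n : ℤ) (hp : p = i - 1) (hn : n = i + 1) :
    (K.homology i : Type u) ≃ₗ[A]
      (↥(LinearMap.ker (K.d i n).hom) ⧸
        (LinearMap.range (K.d p i).hom).comap (LinearMap.ker (K.d i n).hom).subtype) := by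
  subst hp hn
  have hprev : (ComplexShape.up ℤ).prev i = i - 1 := by simp
  have hnext : (ComplexShape.up ℤ).next i = i + 1 := by simp
  refine LinearEquiv.trans
    (LinearEquiv.trans
      (K.homologyIsoSc' (i-1) i (i+1) hprev hnext).toLinearEquiv
      (K.sc' (i-1) i (i+1)).moduleCatHomologyIso.toLinearEquiv)
    (Submodule.quotEquivOfEq _ _ ?_)
  ext x
  simp only [LinearMap.mem_range, Submodule.mem_comap]
  constructor
  · rintro ⟨y, rfl⟩
    exact ⟨y, rfl⟩
  · rintro ⟨y, hy⟩
    exact ⟨y, Subtype.ext hy⟩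

open CategoryTheory CategoryTheory.Limits MonoidalCategory


end Aux

theorem homology_tensor_of_flat
    (A : Type u) [CommRing A] (C : CochainComplex (ModuleCat.{u} A) ℤ)
    (hbdd : ∃ a b : ℤ, ∀ i : ℤ, (i < a ∨ b < i) → IsZero (C.X i))
    (hflat : ∀ i : ℤ, Module.Flat A (C.X i))
    (hflatH : ∀ i : ℤ, Module.Flat A (C.homology i))
    (M : ModuleCat.{u} A) (i : ℤ) :
    Nonempty
      (((((tensorRight M).mapHomologicalComplex (ComplexShape.up ℤ)).obj C).homology i)
        ≃ₗ[A] ((C.homology i) ⊗[A] M)) := by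

  obtain ⟨a, b, hb⟩ := hbdd
  -- basic facts about the differentials
  have hdd : ∀ j k l : ℤ, ∀ x : C.X j,
      (C.d k l) ((C.d j k) x) = 0 := by
    intro j k l x
    exact congr($(C.d_comp_d j k l) x)
  have hle : ∀ j : ℤ, LinearMap.range (C.d j (j+1)).hom ≤ LinearMap.ker (C.d (j+1) (j+2)).hom := by
    rintro j _ ⟨x, rfl⟩
    exact hdd j (j+1) (j+2) x
  -- flatness of cycles from flatness of boundaries one step up
  have flatZ : ∀ j : ℤ, Module.Flat A (LinearMap.range (C.d (j+1) (j+2)).hom) →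
      Module.Flat A (LinearMap.ker (C.d (j+1) (j+2)).hom) := by
    intro j h
    haveI := h
    haveI := hflat (j+1)
    exact flat_ker_of_flat_of_flat (LinearMap.ker (C.d (j+1) (j+2)).hom).subtype
      (C.d (j+1) (j+2)).hom.rangeRestrict (Submodule.injective_subtype _)
      (LinearMap.surjective_rangeRestrict _)
      (by rw [LinearMap.exact_iff, LinearMap.ker_rangeRestrict, Submodule.range_subtype])
  -- flatness of the concrete homology
  have flatH : ∀ j : ℤ, Module.Flat A
      (↥(LinearMap.ker (C.d (j+1) (j+2)).hom) ⧸
        (LinearMap.range (C.d j (j+1)).hom).comap (LinearMap.ker (C.d (j+1) (j+2)).hom).subtype) := by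
    intro j
    haveI := hflatH (j+1)
    exact Module.Flat.of_linearEquiv
      (cochainHomologyEquiv C j (j+1) (j+2) (by omega) (by omega)).symm
  -- flatness of boundaries, by descending induction
  have flatB : ∀ j : ℤ, Module.Flat A (LinearMap.range (C.d j (j+1)).hom) := by
    have zero_case : ∀ j : ℤ, b < j + 1 → Module.Flat A (LinearMap.range (C.d j (j+1)).hom) := by
      intro j hj
      have hz := hb (j+1) (Or.inr hj)
      have h0 : (𝟙 (C.X (j+1)) : C.X (j+1) ⟶ C.X (j+1)) = 0 := hz.eq_of_src _ _
      haveI : Subsingleton (C.X (j+1) : Type u) := by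
        refine ⟨fun x y => ?_⟩
        have hx : x = (𝟙 (C.X (j+1)) : C.X (j+1) ⟶ C.X (j+1)) x := rfl
        have hy : y = (𝟙 (C.X (j+1)) : C.X (j+1) ⟶ C.X (j+1)) y := rfl
        rw [hx, hy, h0]
        rfl
      haveI : Subsingleton ↥(LinearMap.range (C.d j (j+1)).hom) :=
        ⟨fun x y => Subtype.ext (Subsingleton.elim _ _)⟩
      infer_instance
    have step : ∀ n : ℕ, ∀ j : ℤ, b ≤ j + n → Module.Flat A (LinearMap.range (C.d j (j+1)).hom) := by
      intro n
      induction n with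
      | zero =>
        intro j hj
        exact zero_case j (by omega)
      | succ n ih =>
        intro j hj
        by_cases hbj : b ≤ j + n
        · exact ih j hbj
        · -- propagate from j+1
          haveI hB1 : Module.Flat A (LinearMap.range (C.d (j+1) (j+2)).hom) := by
            have h := ih (j+1) (by omega)
            rwa [show j+1+1 = j+2 from by omega] at h
          haveI hZ : Module.Flat A (LinearMap.ker (C.d (j+1) (j+2)).hom) := flatZ j hB1
          haveI hH := flatH j
          haveI hB' : Module.Flat A
              ((LinearMap.range (C.d j (j+1)).hom).comap
                (LinearMap.ker (C.d (j+1) (j+2)).hom).subtype) := by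
            set B' := (LinearMap.range (C.d j (j+1)).hom).comap
              (LinearMap.ker (C.d (j+1) (j+2)).hom).subtype
            exact flat_ker_of_flat_of_flat B'.subtype B'.mkQ
              (Submodule.injective_subtype _) (Submodule.mkQ_surjective _)
              (by rw [LinearMap.exact_iff, Submodule.ker_mkQ, Submodule.range_subtype])
          exact Module.Flat.of_linearEquiv
            (Submodule.comapSubtypeEquivOfLe (hle j)).symm
    intro j
    exact step (b - j).toNat j (by omega)
  -- flatness of the cokernel of each differential
  have flatQuot : ∀ j : ℤ, Module.Flat A
      ((C.X (j+1) : Type u) ⧸ LinearMap.range (C.d j (j+1)).hom) := by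
    intro j
    set U := LinearMap.range (C.d j (j+1)).hom
    set Z := LinearMap.ker (C.d (j+1) (j+2)).hom
    have hUZ : U ≤ Z := hle j
    set Zbar := Z.map U.mkQ with hZbar
    haveI hflatZbar : Module.Flat A ↥Zbar := by
      set φ : ↥Z →ₗ[A] ((C.X (j+1) : Type u) ⧸ U) := U.mkQ ∘ₗ Z.subtype
      have hkerφ : LinearMap.ker φ = U.comap Z.subtype := by
        rw [LinearMap.ker_comp, Submodule.ker_mkQ]
      have hrangeφ : LinearMap.range φ = Zbar := by
        rw [LinearMap.range_comp, Submodule.range_subtype]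
      haveI := flatH j
      refine Module.Flat.of_linearEquiv (LinearEquiv.trans (LinearEquiv.trans
        (LinearEquiv.ofEq _ _ hrangeφ.symm) φ.quotKerEquivRange.symm)
        (Submodule.quotEquivOfEq _ _ hkerφ))
    haveI hflatQQ : Module.Flat A ((((C.X (j+1) : Type u) ⧸ U)) ⧸ Zbar) := by
      haveI : Module.Flat A (LinearMap.range (C.d (j+1) (j+2)).hom) := by
        have h := flatB (j+1)
        rwa [show j+1+1 = j+2 from by omega] at h
      have e1 : ((((C.X (j+1) : Type u) ⧸ U)) ⧸ Zbar) ≃ₗ[A] ((C.X (j+1) : Type u) ⧸ Z) :=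
        Submodule.quotientQuotientEquivQuotient U Z hUZ
      have e2 : ((C.X (j+1) : Type u) ⧸ Z) ≃ₗ[A]
          LinearMap.range (C.d (j+1) (j+2)).hom := (C.d (j+1) (j+2)).hom.quotKerEquivRange
      exact Module.Flat.of_linearEquiv (e1.trans e2)
    exact flat_of_flat_of_flat Zbar.subtype Zbar.mkQ
      (Submodule.injective_subtype _) (Submodule.mkQ_surjective _)
      (by rw [LinearMap.exact_iff, Submodule.ker_mkQ, Submodule.range_subtype])
  -- now apply the key module-level equivalence
  haveI := flatB i
  haveI := flatQuot i
  have hfg : ((C.d i (i+1)).hom : (C.X i : Type u) →ₗ[A] C.X (i+1)) ∘ₗ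
      ((C.d (i-1) i).hom : (C.X (i-1) : Type u) →ₗ[A] C.X i) = 0 := by
    ext x
    exact hdd (i-1) i (i+1) x
  obtain ⟨keq⟩ := key_equiv (R := A)
    ((C.d (i-1) i).hom : (C.X (i-1) : Type u) →ₗ[A] C.X i)
    ((C.d i (i+1)).hom : (C.X i : Type u) →ₗ[A] C.X (i+1)) hfg (M : Type u)
  set T := ((tensorRight M).mapHomologicalComplex (ComplexShape.up ℤ)).obj C with hT
  have eT : (T.homology i : Type u) ≃ₗ[A]
      (↥(LinearMap.ker (T.d i (i+1)).hom) ⧸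
        (LinearMap.range (T.d (i-1) i).hom).comap (LinearMap.ker (T.d i (i+1)).hom).subtype) :=
    cochainHomologyEquiv T (i-1) i (i+1) rfl rfl
  have eC : (C.homology i : Type u) ≃ₗ[A]
      (↥(LinearMap.ker (C.d i (i+1)).hom) ⧸
        (LinearMap.range (C.d (i-1) i).hom).comap (LinearMap.ker (C.d i (i+1)).hom).subtype) :=
    cochainHomologyEquiv C (i-1) i (i+1) rfl rfl
  exact ⟨eT.trans (keq.trans (TensorProduct.congr eC.symm (LinearEquiv.refl A (M : Type u))))⟩
end

section
/- Let A₀ be a commutative ring, B a commutative A₀-algebra, N a B-module, and f, g ∈ B such that multiplication by f is injective on N and multiplication by g is injective on N/fN. Assume that N and N/(f,g)N are flat as A₀-modules. Then for every A₀-module M the four-term sequence 0 → N ⊗_{A₀} M → (N ⊗_{A₀} M) ⊕ (N ⊗_{A₀} M) → N ⊗_{A₀} M → (N/(f,g)N) ⊗_{A₀} M → 0 is exact, where the first map sends x to (−g·x, f·x), the second sends (a, b) to f·a + g·b, and the third is the map induced by the projection N → N/(f,g)N. (Here B acts on N ⊗_{A₀} M through its action on N.) -/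
/-!
STATEMENT 3: the augmented Koszul complex of a regular pair `(f, g)` on `N`
stays exact after tensoring over `A₀` with an arbitrary module `M`, provided
`N` and `N/(f,g)N` are flat over `A₀`.
-/

open TensorProduct

section L1
variable {R A B : Type*} [CommRing R] [AddCommGroup A] [AddCommGroup B]
    [Module R A] [Module R B]

lemma aux_dual_exact (i : A →ₗ[R] B)
    (c : CharacterModule B) (hc : CharacterModule.dual i c = 0) :
    ∃ cbar : CharacterModule (B ⧸ LinearMap.range i),
      CharacterModule.dual ((LinearMap.range i).mkQ) cbar = c := by
  have hvan : ∀ b ∈ (LinearMap.range i).toAddSubgroup, c b = 0 := by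
    rintro b ⟨a, rfl⟩
    exact congr($(hc) a)
  refine ⟨QuotientAddGroup.lift (LinearMap.range i).toAddSubgroup c hvan, ?_⟩
  ext b
  rfl

/-- If `i` is injective with flat cokernel, there is a linear section of `dual i`. -/
lemma aux_section (i : A →ₗ[R] B) (hi : Function.Injective i)
    (hC : Module.Flat R (B ⧸ LinearMap.range i)) :
    ∃ s : CharacterModule A →ₗ[R] CharacterModule B,
      ∀ χ, CharacterModule.dual i (s χ) = χ := by
  set p := (LinearMap.range i).mkQ
  set dp := CharacterModule.dual (R := R) p
  have hdp_inj : Function.Injective dp := by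
    intro c c' h
    ext b'
    obtain ⟨b, rfl⟩ := Submodule.mkQ_surjective _ b'
    exact congr($(h) b)
  obtain ⟨r, hr⟩ := (Module.Flat.iff_characterModule_baer.1 hC).extension_property
    dp hdp_inj LinearMap.id
  set di := CharacterModule.dual (R := R) i
  have hdi_surj : Function.Surjective di := CharacterModule.dual_surjective_of_injective i hi
  set q : CharacterModule B →ₗ[R] CharacterModule B := LinearMap.id - dp ∘ₗ r
  have hker : LinearMap.ker di ≤ LinearMap.ker q := by
    intro c hc
    obtain ⟨cbar, rfl⟩ := aux_dual_exact i c hc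
    have h1 : r (dp cbar) = cbar := congr($(hr) cbar)
    have : q (dp cbar) = dp cbar - dp (r (dp cbar)) := rfl
    rw [LinearMap.mem_ker, this, h1, sub_self]
  have hdiq : ∀ c, di (q c) = di c := by
    intro c
    have h0 : di (dp (r c)) = 0 := by
      ext a
      show (r c) (p (i a)) = 0
      rw [show p (i a) = 0 by simp [p], map_zero]
    simp [q, map_sub, h0]
  set e := LinearMap.quotKerEquivOfSurjective di hdi_surj
  refine ⟨(LinearMap.ker di).liftQ q hker ∘ₗ (e.symm : CharacterModule A →ₗ[R] _), ?_⟩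
  intro χ
  obtain ⟨c, rfl⟩ := hdi_surj χ
  have he : e (Submodule.Quotient.mk c) = di c := rfl
  have : e.symm (di c) = Submodule.Quotient.mk c := by
    rw [← he, LinearEquiv.symm_apply_apply]
  simp only [LinearMap.comp_apply, LinearEquiv.coe_coe, this, Submodule.liftQ_apply]
  exact hdiq c

/-- An injective map with flat cokernel stays injective after `rTensor`. -/
lemma aux_rTensor_injective (i : A →ₗ[R] B) (hi : Function.Injective i)
    (hC : Module.Flat R (B ⧸ LinearMap.range i)) (M : Type*) [AddCommGroup M] [Module R M] :
    Function.Injective (i.rTensor M) := by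
  obtain ⟨s, hs⟩ := aux_section i hi hC
  rw [← CharacterModule.dual_surjective_iff_injective]
  intro χ
  set u : M →ₗ[R] CharacterModule A :=
    { toFun := fun m =>
        { toFun := fun a => χ (a ⊗ₜ m)
          map_zero' := by show χ ((0 : A) ⊗ₜ m) = 0; rw [TensorProduct.zero_tmul, map_zero]
          map_add' := fun a a' => by
            show χ ((a + a') ⊗ₜ m) = χ (a ⊗ₜ m) + χ (a' ⊗ₜ m)
            rw [TensorProduct.add_tmul, map_add] }
      map_add' := fun m m' => by
        ext a
        show χ (a ⊗ₜ (m + m')) = χ (a ⊗ₜ m) + χ (a ⊗ₜ m')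
        rw [TensorProduct.tmul_add, map_add]
      map_smul' := fun c m => by
        ext a
        show χ (a ⊗ₜ (c • m)) = χ ((c • a) ⊗ₜ m)
        rw [TensorProduct.smul_tmul] }
  set v : M →ₗ[R] CharacterModule B := s ∘ₗ u
  refine ⟨(CharacterModule.uncurry v).comp
    ((TensorProduct.comm R B M).toLinearMap.toAddMonoidHom), ?_⟩
  ext x
  induction x using TensorProduct.induction_on with
  | zero => rw [map_zero, map_zero]
  | tmul a m =>
      show (CharacterModule.uncurry v) ((TensorProduct.comm R B M) ((i a) ⊗ₜ m)) = χ (a ⊗ₜ m)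
      rw [TensorProduct.comm_tmul]
      show (s (u m)) (i a) = χ (a ⊗ₜ m)
      exact congr($(hs (u m)) a)
  | add x y hx hy =>
      show (CharacterModule.dual (LinearMap.rTensor M i)) _ (x + y) = χ (x + y)
      rw [map_add, map_add]
      exact congr($hx + $hy)

/-- If `B` and `B ⧸ range i` are flat and `i : A → B` is injective, then `A` is flat. -/
lemma aux_flat_kernel (i : A →ₗ[R] B) (hi : Function.Injective i)
    (hB : Module.Flat R B) (hC : Module.Flat R (B ⧸ LinearMap.range i)) :
    Module.Flat R A := by
  haveI := hB
  rw [Module.Flat.iff_rTensor_injective']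
  intro I
  have h1 : Function.Injective (i.lTensor I) :=
    (i.lTensor_inj_iff_rTensor_inj I).2 (aux_rTensor_injective i hi hC I)
  have h2 : Function.Injective ((I.subtype).rTensor B) :=
    Module.Flat.rTensor_preserves_injective_linearMap I.subtype I.injective_subtype
  have hcomm : (i.lTensor R) ∘ₗ ((I.subtype).rTensor A)
      = ((I.subtype).rTensor B) ∘ₗ (i.lTensor I) := by
    rw [LinearMap.lTensor_comp_rTensor, LinearMap.rTensor_comp_lTensor]
  have : Function.Injective ((i.lTensor R) ∘ₗ ((I.subtype).rTensor A)) := by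
    rw [hcomm]; exact h2.comp h1
  exact Function.Injective.of_comp (f := i.lTensor R) this

end L1

theorem koszul_complex_tensor_exact
    (A₀ B N M : Type*) [CommRing A₀] [CommRing B] [Algebra A₀ B]
    [AddCommGroup N] [Module B N] [Module A₀ N] [IsScalarTower A₀ B N]
    [AddCommGroup M] [Module A₀ M]
    (f g : B)
    (hf : Function.Injective fun x : N => f • x)
    (hg : Function.Injective
      fun x : N ⧸ LinearMap.range (LinearMap.lsmul B N f) => g • x)
    (hN : Module.Flat A₀ N)
    (hNfg : Module.Flat A₀
      (N ⧸ (LinearMap.range (LinearMap.lsmul B N f) ⊔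
        LinearMap.range (LinearMap.lsmul B N g)))) :
    Function.Injective
      (LinearMap.prod (-(((LinearMap.lsmul B N g).restrictScalars A₀).rTensor M))
        (((LinearMap.lsmul B N f).restrictScalars A₀).rTensor M)) ∧
    Function.Exact
      (LinearMap.prod (-(((LinearMap.lsmul B N g).restrictScalars A₀).rTensor M))
        (((LinearMap.lsmul B N f).restrictScalars A₀).rTensor M))
      (LinearMap.coprod (((LinearMap.lsmul B N f).restrictScalars A₀).rTensor M)
        (((LinearMap.lsmul B N g).restrictScalars A₀).rTensor M)) ∧
    Function.Exact
      (LinearMap.coprod (((LinearMap.lsmul B N f).restrictScalars A₀).rTensor M)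
        (((LinearMap.lsmul B N g).restrictScalars A₀).rTensor M))
      ((((LinearMap.range (LinearMap.lsmul B N f) ⊔
          LinearMap.range (LinearMap.lsmul B N g)).mkQ).restrictScalars A₀).rTensor M) ∧
    Function.Surjective
      ((((LinearMap.range (LinearMap.lsmul B N f) ⊔
          LinearMap.range (LinearMap.lsmul B N g)).mkQ).restrictScalars A₀).rTensor M) := by
  haveI := hN
  haveI := hNfg
  set Fb := LinearMap.lsmul B N f with hFb
  set Gb := LinearMap.lsmul B N g with hGb
  set S : Submodule B N := LinearMap.range Fb ⊔ LinearMap.range Gb with hS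
  set F := Fb.restrictScalars A₀ with hF
  set G := Gb.restrictScalars A₀ with hG
  set j : N →ₗ[A₀] N × N := LinearMap.prod (-G) F with hj
  set k : N × N →ₗ[A₀] N := LinearMap.coprod F G with hk
  set π := (S.mkQ).restrictScalars A₀ with hπ
  -- untensored facts
  have hU1 : Function.Injective j := by
    intro x y h
    exact hf (congrArg Prod.snd h)
  have hsc : ∀ x : N, g • f • x = f • g • x := by
    intro x
    rw [smul_smul, smul_smul, mul_comm]
  have hU2 : LinearMap.ker k = LinearMap.range j := by
    ext z
    obtain ⟨a, b⟩ := z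
    constructor
    · intro hab
      have hab' : f • a + g • b = 0 := hab
      have hgb : g • b = Fb (-a) := by
        show g • b = f • (-a)
        rw [smul_neg, eq_neg_iff_add_eq_zero, add_comm]
        exact hab'
      have h1 : g • (Submodule.Quotient.mk b : N ⧸ LinearMap.range Fb) = 0 := by
        rw [← Submodule.Quotient.mk_smul, Submodule.Quotient.mk_eq_zero]
        exact ⟨-a, hgb.symm⟩
      have h2 : (Submodule.Quotient.mk b : N ⧸ LinearMap.range Fb) = 0 := by
        apply hg
        show g • _ = g • (0 : N ⧸ LinearMap.range Fb)
        rw [h1, smul_zero]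
      rw [Submodule.Quotient.mk_eq_zero] at h2
      obtain ⟨x, hx⟩ := h2
      have hxb : f • x = b := hx
      have ha : f • (a + g • x) = 0 := by
        rw [smul_add, ← hsc x, hxb]
        exact hab'
      have ha' : a + g • x = 0 := by
        apply hf
        show f • (a + g • x) = f • (0 : N)
        rw [ha, smul_zero]
      refine ⟨x, ?_⟩
      have hax : a = -(g • x) := by rw [eq_neg_iff_add_eq_zero]; exact ha'
      show (-(g • x), f • x) = (a, b)
      rw [← hax, hxb]
    · rintro ⟨x, hx⟩
      rw [LinearMap.mem_ker, ← hx]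
      show f • (-(g • x)) + g • (f • x) = 0
      rw [smul_neg, hsc x, neg_add_cancel]
  have hU3 : LinearMap.ker π = LinearMap.range k := by
    ext x
    constructor
    · intro hx
      have : x ∈ S := by
        rw [← Submodule.ker_mkQ S]
        exact hx
      rw [Submodule.mem_sup] at this
      obtain ⟨y, ⟨a, rfl⟩, z, ⟨b, rfl⟩, rfl⟩ := this
      exact ⟨(a, b), rfl⟩
    · rintro ⟨⟨a, b⟩, rfl⟩
      show S.mkQ (f • a + g • b) = 0
      have hmem : f • a + g • b ∈ S := by
        apply Submodule.add_mem
        · exact Submodule.mem_sup_left ⟨a, rfl⟩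
        · exact Submodule.mem_sup_right ⟨b, rfl⟩
      rw [show S.mkQ (f • a + g • b) = Submodule.Quotient.mk (f • a + g • b) from rfl,
        Submodule.Quotient.mk_eq_zero]
      exact hmem
  have hπ_surj : Function.Surjective π := Submodule.mkQ_surjective S
  -- flatness of the image submodule
  set T : Submodule A₀ N := LinearMap.range k with hT
  have hquot_flat : Module.Flat A₀ (N ⧸ T) := by
    have hle : T ≤ LinearMap.ker π := le_of_eq hU3.symm
    set φ := T.liftQ π hle with hφ
    have hφsurj : Function.Surjective φ := by
      intro y
      obtain ⟨x, rfl⟩ := hπ_surj y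
      exact ⟨T.mkQ x, rfl⟩
    have hφinj : Function.Injective φ := by
      rw [← LinearMap.ker_eq_bot]
      exact Submodule.ker_liftQ_eq_bot T π hle (le_of_eq hU3)
    exact Module.Flat.of_linearEquiv (LinearEquiv.ofBijective φ ⟨hφinj, hφsurj⟩)
  have hT_flat : Module.Flat A₀ T := by
    apply aux_flat_kernel T.subtype T.injective_subtype hN
    rw [Submodule.range_subtype]
    exact hquot_flat
  have hcok_j_flat : Module.Flat A₀ ((N × N) ⧸ LinearMap.range j) := by
    haveI := hT_flat
    exact Module.Flat.of_linearEquiv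
      ((Submodule.quotEquivOfEq _ _ hU2.symm) ≪≫ₗ k.quotKerEquivRange)
  -- tensored injectivity of j
  have hTj : Function.Injective (j.rTensor M) := aux_rTensor_injective j hU1 hcok_j_flat M
  -- exactness of tensored (j, k)
  have hk'_surj : Function.Surjective k.rangeRestrict := k.surjective_rangeRestrict
  have hexact_jk' : Function.Exact j k.rangeRestrict := by
    rw [LinearMap.exact_iff, LinearMap.ker_rangeRestrict, hU2]
  have hT1 : Function.Exact (j.rTensor M) (k.rangeRestrict.rTensor M) :=
    rTensor_exact M hexact_jk' hk'_surj
  have hι_inj : Function.Injective (T.subtype.rTensor M) := by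
    apply aux_rTensor_injective T.subtype T.injective_subtype
    rw [Submodule.range_subtype]
    exact hquot_flat
  have hker_k_tensor : LinearMap.ker (k.rTensor M) = LinearMap.range (j.rTensor M) := by
    have hkc : T.subtype ∘ₗ k.rangeRestrict = k := rfl
    rw [← hkc, LinearMap.rTensor_comp, LinearMap.ker_comp,
      (LinearMap.ker_eq_bot.2 hι_inj), Submodule.comap_bot]
    exact LinearMap.exact_iff.1 hT1
  -- exactness of tensored (k, π)
  have hexact_kπ : Function.Exact k π := LinearMap.exact_iff.2 hU3
  have hT3 : Function.Exact (k.rTensor M) (π.rTensor M) :=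
    rTensor_exact M hexact_kπ hπ_surj
  -- the product equivalence
  set prodE := TensorProduct.prodLeft A₀ A₀ N N M with hprodE
  have C1 : LinearMap.prod (-(G.rTensor M)) (F.rTensor M)
      = prodE.toLinearMap ∘ₗ j.rTensor M := by
    apply TensorProduct.ext'
    intro x m
    simp [j, prodE, TensorProduct.neg_tmul]
  have C2 : LinearMap.coprod (F.rTensor M) (G.rTensor M) ∘ₗ prodE.toLinearMap
      = k.rTensor M := by
    apply TensorProduct.ext'
    rintro ⟨x, y⟩ m
    simp [k, prodE, TensorProduct.add_tmul]
  have hKeq : LinearMap.coprod (F.rTensor M) (G.rTensor M)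
      = (k.rTensor M) ∘ₗ prodE.symm.toLinearMap := by
    refine LinearMap.ext fun z => ?_
    conv_lhs => rw [← prodE.apply_symm_apply z]
    exact congr($(C2) (prodE.symm z))
  refine ⟨?_, ?_, ?_, ?_⟩
  · rw [C1, LinearMap.coe_comp, LinearEquiv.coe_coe]
    exact prodE.injective.comp hTj
  · rw [LinearMap.exact_iff, hKeq, C1, LinearMap.ker_comp, LinearMap.range_comp,
      hker_k_tensor]
    rw [Submodule.map_equiv_eq_comap_symm]
  · rw [LinearMap.exact_iff, hKeq, LinearMap.range_comp, LinearEquiv.range,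
      Submodule.map_top]
    exact LinearMap.exact_iff.1 hT3
  · exact LinearMap.rTensor_surjective M hπ_surj
end
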